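/- Let (R, m) be a chained ring with zero divisors such that Z(R) = m. If 0 ≠ x ∈ m and (0 : x) is a principal ideal, then R has infinite weak global dimension. -/

import Mathlib

universe u v

/-- A chained (valuation) ring: the ideals are totally ordered by inclusion. -/
def IsChainedRing (R : Type*) [CommRing R] : Prop :=
  ∀ I J : Ideal R, I ≤ J ∨ J ≤ I

/-- `R` has zero divisors. -/
def HasZeroDivisors (R : Type*) [CommRing R] : Prop :=
  ∃ a b : R, a ≠ 0 ∧ b ≠ 0 ∧ a * b = 0

/-- An arithmetical ring: the localization at every maximal ideal is a chained ring. -/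
def IsArithmetical (R : Type*) [CommRing R] : Prop :=
  ∀ (P : Ideal R) (hP : P.IsMaximal),
    letI := hP.isPrime
    ∀ I J : Ideal (Localization.AtPrime P), I ≤ J ∨ J ≤ I

/-- `FlatDimLE R n M` : the flat (weak) dimension of `M` is at most `n`. -/
def FlatDimLE (R : Type u) [CommRing R] : ℕ → ModuleCat.{u} R → Prop
  | 0, M => Module.Flat R M
  | (n+1), M => ∃ (F : ModuleCat.{u} R) (f : F →ₗ[R] M), Function.Surjective f ∧
      Module.Flat R F ∧ FlatDimLE R n (ModuleCat.of R (LinearMap.ker f))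

/-- The flat (weak) dimension of a module, valued in `ℕ∞` (`⊤` if no finite flat resolution). -/
noncomputable def flatDim (R : Type u) [CommRing R] (M : ModuleCat.{u} R) : ℕ∞ :=
  sInf {n : ℕ∞ | ∃ k : ℕ, n = (k : ℕ∞) ∧ FlatDimLE R k M}

/-- The weak global dimension of `R` is at most `n`. -/
def WgdimLE (R : Type u) [CommRing R] (n : ℕ) : Prop :=
  ∀ M : ModuleCat.{u} R, FlatDimLE R n M

/-- The weak global dimension of `R` is infinite. -/
def HasInfiniteWeakGlobalDimension (R : Type u) [CommRing R] : Prop :=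
  ∀ n : ℕ, ∃ M : ModuleCat.{u} R, ¬ FlatDimLE R n M

/-- The content ideal of a polynomial: the ideal generated by its coefficients. -/
def contentIdeal {R : Type*} [CommRing R] (f : Polynomial R) : Ideal R :=
  Ideal.span (Set.range f.coeff)

/-- A Gaussian ring: `c(fg) = c(f)c(g)` for all polynomials. -/
def IsGaussian (R : Type*) [CommRing R] : Prop :=
  ∀ f g : Polynomial R, contentIdeal (f * g) = contentIdeal f * contentIdeal g

/-- A Prüfer ring: every finitely generated regular ideal is invertible. -/
def IsPruferRing (R : Type u) [CommRing R] : Prop :=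
  ∀ I : Ideal R, I.FG → (∃ x ∈ I, x ∈ nonZeroDivisors R) →
    IsUnit (I : FractionalIdeal (nonZeroDivisors R) (FractionRing R))

/-- A quasi-projective module: every map to a quotient of `M` lifts to an endomorphism. -/
def IsQuasiProjective (R : Type u) [CommRing R] (M : Type v) [AddCommGroup M] [Module R M] : Prop :=
  ∀ (N : Submodule R M) (g : M →ₗ[R] M ⧸ N), ∃ h : M →ₗ[R] M, N.mkQ.comp h = g

set_option maxHeartbeats 1000000

open LinearMap TensorProduct

section FlatLemmas

variable {R : Type u} [CommRing R]
variable {A B C : Type u} [AddCommGroup A] [Module R A]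
    [AddCommGroup B] [Module R B] [AddCommGroup C] [Module R C]

/-- Chase lemma: purity via a flat cover of `N`. -/
theorem lTensor_injective_of_flat_quotient_aux (N : Type u) [AddCommGroup N] [Module R N]
    (f : A →ₗ[R] B) (g : B →ₗ[R] C) (hf : Function.Injective f)
    (hg : Function.Surjective g) (hfg : Function.Exact f g) [Module.Flat R C]
    (F : Type u) [AddCommGroup F] [Module R F] [Module.Flat R F]
    (p : F →ₗ[R] N) (hpsurj : Function.Surjective p) :
    Function.Injective (lTensor N f) := by
  rw [injective_iff_map_eq_zero]
  intro t ht
  have exact_kp : Function.Exact (LinearMap.ker p).subtype p := LinearMap.exact_subtype_ker_map p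
  obtain ⟨u, rfl⟩ := rTensor_surjective A hpsurj t
  have h1 : rTensor B p (lTensor F f u) = 0 := by
    rw [← comp_apply, rTensor_comp_lTensor, ← lTensor_comp_rTensor, comp_apply, ht]
  have exact_B : Function.Exact (rTensor B (LinearMap.ker p).subtype) (rTensor B p) :=
    rTensor_exact B exact_kp hpsurj
  obtain ⟨w, hw⟩ := (exact_B _).mp h1
  have h2 : rTensor C (LinearMap.ker p).subtype (lTensor _ g w) = 0 := by
    rw [← comp_apply, rTensor_comp_lTensor, ← lTensor_comp_rTensor, comp_apply, hw,
      ← comp_apply, ← lTensor_comp, hfg.linearMap_comp_eq_zero, lTensor_zero, LinearMap.zero_apply]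
  have hkinj : Function.Injective (rTensor C (LinearMap.ker p).subtype) :=
    Module.Flat.rTensor_preserves_injective_linearMap _ (Submodule.injective_subtype _)
  have h3 : lTensor _ g w = 0 := hkinj (h2.trans (map_zero _).symm)
  have exact_K : Function.Exact (lTensor (LinearMap.ker p) f) (lTensor _ g) :=
    lTensor_exact _ hfg hg
  obtain ⟨v, hv⟩ := (exact_K w).mp h3
  have hFinj : Function.Injective (lTensor F f) :=
    Module.Flat.lTensor_preserves_injective_linearMap f hf
  have h4 : lTensor F f (rTensor A (LinearMap.ker p).subtype v) = lTensor F f u := by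
    rw [← comp_apply, lTensor_comp_rTensor, ← rTensor_comp_lTensor, comp_apply, hv, hw]
  have h5 : rTensor A (LinearMap.ker p).subtype v = u := hFinj h4
  rw [← h5, ← comp_apply, ← rTensor_comp]
  have hpk : p.comp (LinearMap.ker p).subtype = 0 := by
    ext z
    exact z.2
  rw [hpk, rTensor_zero, LinearMap.zero_apply]

/-- If `C` is flat and `0 → A → B → C → 0` is exact, the sequence is pure:
tensoring the injection with any module stays injective. -/
theorem lTensor_injective_of_flat_quotient (N : Type u) [AddCommGroup N] [Module R N]
    (f : A →ₗ[R] B) (g : B →ₗ[R] C) (hf : Function.Injective f)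
    (hg : Function.Surjective g) (hfg : Function.Exact f g) [Module.Flat R C] :
    Function.Injective (lTensor N f) :=
  lTensor_injective_of_flat_quotient_aux N f g hf hg hfg (N →₀ R)
    (Finsupp.linearCombination R _root_.id)
    (fun n => ⟨Finsupp.single n 1, by rw [Finsupp.linearCombination_single, one_smul]; rfl⟩)

/-- Two-out-of-three: in `0 → A → B → C → 0` with `B, C` flat, `A` is flat. -/
theorem flat_of_flat_flat (f : A →ₗ[R] B) (g : B →ₗ[R] C) (hf : Function.Injective f)
    (hg : Function.Surjective g) (hfg : Function.Exact f g)
    [Module.Flat R B] [Module.Flat R C] : Module.Flat R A := by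
  rw [Module.Flat.iff_rTensor_injective']
  intro I
  rw [injective_iff_map_eq_zero]
  intro t ht
  have h1 : rTensor B I.subtype (lTensor I f t) = 0 := by
    rw [← comp_apply, rTensor_comp_lTensor, ← lTensor_comp_rTensor, comp_apply, ht, map_zero]
  have h2 : lTensor I f t = 0 :=
    (Module.Flat.iff_rTensor_injective' (R := R) (M := B)).mp inferInstance I (h1.trans (map_zero _).symm)
  exact lTensor_injective_of_flat_quotient I f g hf hg hfg h2

/-- Two-out-of-three: in `0 → A → B → C → 0` with `A, C` flat, `B` is flat. -/
theorem flat_of_flat_sub_quot (f : A →ₗ[R] B) (g : B →ₗ[R] C) (hf : Function.Injective f)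
    (hg : Function.Surjective g) (hfg : Function.Exact f g)
    [Module.Flat R A] [Module.Flat R C] : Module.Flat R B := by
  rw [Module.Flat.iff_rTensor_injective']
  intro I
  rw [injective_iff_map_eq_zero]
  intro t ht
  have h1 : rTensor C I.subtype (lTensor I g t) = 0 := by
    rw [← comp_apply, rTensor_comp_lTensor, ← lTensor_comp_rTensor, comp_apply, ht, map_zero]
  have h2 : lTensor I g t = 0 :=
    (Module.Flat.iff_rTensor_injective' (R := R) (M := C)).mp inferInstance I (h1.trans (map_zero _).symm)
  have exact_I : Function.Exact (lTensor I f) (lTensor I g) :=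
    lTensor_exact I hfg hg
  obtain ⟨s, hs⟩ := (exact_I t).mp h2
  have h3 : lTensor R f (rTensor A I.subtype s) = 0 := by
    rw [← comp_apply, lTensor_comp_rTensor, ← rTensor_comp_lTensor, comp_apply, hs, ht]
  have hRinj : Function.Injective (lTensor R f) :=
    Module.Flat.lTensor_preserves_injective_linearMap f hf
  have h4 : rTensor A I.subtype s = 0 := hRinj (h3.trans (map_zero _).symm)
  have h5 : s = 0 :=
    (Module.Flat.iff_rTensor_injective' (R := R) (M := A)).mp inferInstance I h4
  rw [← hs, h5, map_zero]

end FlatLemmas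
section FDMachinery

open LinearMap

variable {R : Type u} [CommRing R]

theorem flat_prod (M N : Type u) [AddCommGroup M] [Module R M] [AddCommGroup N] [Module R N]
    [Module.Flat R M] [Module.Flat R N] : Module.Flat R (M × N) :=
  flat_of_flat_sub_quot (LinearMap.inl R M N) (LinearMap.snd R M N)
    LinearMap.inl_injective (fun n => ⟨(0, n), rfl⟩) Function.Exact.inl_snd

/-- `FlatDimLE` transfers along linear equivalences. -/
theorem fd_congr {M N : Type u} [AddCommGroup M] [Module R M] [AddCommGroup N] [Module R N]
    (e : M ≃ₗ[R] N) : ∀ n : ℕ, FlatDimLE R n (ModuleCat.of R M) →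
      FlatDimLE R n (ModuleCat.of R N)
  | 0, h => by
    have : Module.Flat R M := h
    exact Module.Flat.of_linearEquiv e.symm
  | (n+1), h => by
    obtain ⟨F, f, hsurj, hF, hker⟩ := h
    refine ⟨F, e.toLinearMap.comp f, e.surjective.comp hsurj, hF, ?_⟩
    have hk : LinearMap.ker (e.toLinearMap.comp f) = LinearMap.ker f := by
      rw [LinearMap.ker_comp, LinearEquiv.ker, Submodule.comap_bot]
    rw [hk]
    exact hker

/-- Dimension shift, downward: from `FlatDimLE n B` to the kernel of a surjection
onto a flat module. -/
theorem fd_ker_of_fd (n : ℕ) {B C : Type u} [AddCommGroup B] [Module R B]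
    [AddCommGroup C] [Module R C] [Module.Flat R C] (g : B →ₗ[R] C)
    (hg : Function.Surjective g) (h : FlatDimLE R n (ModuleCat.of R B)) :
    FlatDimLE R n (ModuleCat.of R (LinearMap.ker g)) := by
  induction n with
  | zero =>
    have : Module.Flat R B := h
    exact flat_of_flat_flat (LinearMap.ker g).subtype g (Submodule.injective_subtype _) hg
      (LinearMap.exact_subtype_ker_map g)
  | succ n _ =>
    obtain ⟨F, f, hsurj, hF, hker⟩ := h
    let f₀ : ↑F →ₗ[R] B := f
    let g' : ↑F →ₗ[R] C := g.comp f₀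
    have hg'surj : Function.Surjective g' := hg.comp hsurj
    have hmem : ∀ x : ↥(LinearMap.ker g'), f₀ ((LinearMap.ker g').subtype x) ∈ LinearMap.ker g :=
      fun x => x.2
    let f' : ↥(LinearMap.ker g') →ₗ[R] ↥(LinearMap.ker g) :=
      LinearMap.codRestrict (LinearMap.ker g) (f₀.comp (LinearMap.ker g').subtype) hmem
    have hf'surj : Function.Surjective f' := by
      rintro ⟨b, hb⟩
      obtain ⟨a, ha⟩ := hsurj b
      have hag : a ∈ LinearMap.ker g' := by
        show g (f₀ a) = 0
        rw [show f₀ a = b from ha]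
        exact hb
      exact ⟨⟨a, hag⟩, Subtype.ext ha⟩
    have hF' : Module.Flat R ↥(LinearMap.ker g') :=
      flat_of_flat_flat (LinearMap.ker g').subtype g' (Submodule.injective_subtype _) hg'surj
        (LinearMap.exact_subtype_ker_map g')
    refine ⟨ModuleCat.of R ↥(LinearMap.ker g'), f', hf'surj, hF', ?_⟩
    have hkf' : LinearMap.ker f' =
        Submodule.comap (LinearMap.ker g').subtype (LinearMap.ker f₀) := by
      rw [LinearMap.ker_codRestrict]
      exact LinearMap.ker_comp _ _
    have hle : LinearMap.ker f₀ ≤ LinearMap.ker g' := fun a ha =>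
      LinearMap.mem_ker.mpr (by
        show g (f₀ a) = 0
        rw [LinearMap.mem_ker.mp ha, map_zero])
    rw [hkf']
    exact fd_congr (Submodule.comapSubtypeEquivOfLe hle).symm n hker

/-- Horseshoe step with an abstract flat cover of `C`. -/
theorem fd_horseshoe (n : ℕ) {B C G F₀ : Type u} [AddCommGroup B] [Module R B]
    [AddCommGroup C] [Module R C] [AddCommGroup G] [Module R G] [AddCommGroup F₀] [Module R F₀]
    [Module.Flat R G] [Module.Flat R F₀]
    (g : B →ₗ[R] C) (hg : Function.Surjective g)
    (q : G →ₗ[R] ↥(LinearMap.ker g)) (hq : Function.Surjective q)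
    (p : F₀ →ₗ[R] C) (hp : Function.Surjective p) [Module.Flat R ↥(LinearMap.ker p)]
    (h : F₀ →ₗ[R] B) (hgh : ∀ v, g (h v) = p v)
    (IH : ∀ {B' C' : Type u} [AddCommGroup B'] [Module R B'] [AddCommGroup C'] [Module R C']
      [Module.Flat R C'] (g' : B' →ₗ[R] C') (_ : Function.Surjective g'),
      FlatDimLE R n (ModuleCat.of R (LinearMap.ker g')) → FlatDimLE R n (ModuleCat.of R B'))
    (hkq : FlatDimLE R n (ModuleCat.of R (LinearMap.ker q))) :
    FlatDimLE R (n + 1) (ModuleCat.of R B) := by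
  let φ : (G × F₀) →ₗ[R] B :=
    ((LinearMap.ker g).subtype.comp q).comp (LinearMap.fst R G F₀) +
      h.comp (LinearMap.snd R G F₀)
  have hφ_apply : ∀ (a : G) (v : F₀), φ (a, v) = ((q a : ↥(LinearMap.ker g)) : B) + h v :=
    fun a v => rfl
  have hφsurj : Function.Surjective φ := by
    intro b
    obtain ⟨v, hv⟩ := hp (g b)
    have hbv : b - h v ∈ LinearMap.ker g := by
      rw [LinearMap.mem_ker, map_sub, hgh, hv, sub_self]
    obtain ⟨a, ha⟩ := hq ⟨b - h v, hbv⟩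
    refine ⟨(a, v), ?_⟩
    rw [hφ_apply, ha]
    simp
  have hGF : Module.Flat R (G × F₀) := flat_prod _ _
  have hmem2 : ∀ x : ↥(LinearMap.ker φ),
      (LinearMap.snd R G F₀) ((LinearMap.ker φ).subtype x) ∈ LinearMap.ker p := by
    rintro ⟨⟨a, v⟩, hx⟩
    have h0 : g (φ (a, v)) = 0 := by
      rw [show φ (a, v) = 0 from hx, map_zero]
    rw [hφ_apply, map_add, hgh] at h0
    have hqa : g ((q a : ↥(LinearMap.ker g)) : B) = 0 := (q a).2
    rw [hqa, zero_add] at h0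
    exact h0
  let π : ↥(LinearMap.ker φ) →ₗ[R] ↥(LinearMap.ker p) :=
    LinearMap.codRestrict (LinearMap.ker p)
      ((LinearMap.snd R G F₀).comp (LinearMap.ker φ).subtype) hmem2
  have hπsurj : Function.Surjective π := by
    rintro ⟨v, hv⟩
    have hmv : h v ∈ LinearMap.ker g := by
      rw [LinearMap.mem_ker, hgh]
      exact hv
    obtain ⟨a, ha⟩ := hq (-⟨h v, hmv⟩)
    have hav : (a, v) ∈ LinearMap.ker φ := by
      rw [LinearMap.mem_ker, hφ_apply, ha]
      simp
    exact ⟨⟨(a, v), hav⟩, Subtype.ext rfl⟩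
  have hmemk : ∀ x : ↥(LinearMap.ker π), q (x.1.1 : G × F₀).1 = 0 := by
    rintro ⟨⟨⟨a, v⟩, hav⟩, hx⟩
    have hv0 : v = 0 := congrArg Subtype.val (LinearMap.mem_ker.mp hx)
    have h0 : φ (a, v) = 0 := hav
    rw [hφ_apply, hv0, map_zero, add_zero] at h0
    exact Subtype.ext h0
  have hmemq : ∀ a : ↥(LinearMap.ker q), ((a.1, (0 : F₀)) : G × F₀) ∈ LinearMap.ker φ := by
    rintro ⟨a, ha⟩
    rw [LinearMap.mem_ker, hφ_apply, LinearMap.mem_ker.mp ha]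
    simp
  let e : ↥(LinearMap.ker π) ≃ₗ[R] ↥(LinearMap.ker q) :=
    { toFun := fun x => ⟨(x.1.1 : G × F₀).1, hmemk x⟩
      map_add' := fun x y => Subtype.ext rfl
      map_smul' := fun c x => Subtype.ext rfl
      invFun := fun a => ⟨⟨(a.1, 0), hmemq a⟩, Subtype.ext rfl⟩
      left_inv := by
        rintro ⟨⟨⟨a, v⟩, hav⟩, hx⟩
        have hv0 : v = 0 := congrArg Subtype.val (LinearMap.mem_ker.mp hx)
        exact Subtype.ext (Subtype.ext (Prod.ext rfl hv0.symm))
      right_inv := fun a => Subtype.ext rfl }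
  have hkπ : FlatDimLE R n (ModuleCat.of R ↥(LinearMap.ker π)) :=
    fd_congr e.symm n hkq
  have hkφ : FlatDimLE R n (ModuleCat.of R ↥(LinearMap.ker φ)) :=
    IH π hπsurj hkπ
  exact ⟨ModuleCat.of R (G × F₀), φ, hφsurj, hGF, hkφ⟩

/-- Dimension shift, upward. -/
theorem fd_of_fd_ker (n : ℕ) : ∀ {B C : Type u} [AddCommGroup B] [Module R B]
    [AddCommGroup C] [Module R C] [_i : Module.Flat R C] (g : B →ₗ[R] C)
    (_ : Function.Surjective g),
    FlatDimLE R n (ModuleCat.of R (LinearMap.ker g)) → FlatDimLE R n (ModuleCat.of R B) := by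
  induction n with
  | zero =>
    intro B C _ _ _ _ _ g hg h
    have : Module.Flat R ↥(LinearMap.ker g) := h
    exact flat_of_flat_sub_quot (LinearMap.ker g).subtype g (Submodule.injective_subtype _) hg
      (LinearMap.exact_subtype_ker_map g)
  | succ n ih =>
    intro B C _ _ _ _ _ g hg h
    obtain ⟨G, q₀, hq, hG, hkq₀⟩ := h
    let q : ↑G →ₗ[R] ↥(LinearMap.ker g) := q₀
    have hqsurj : Function.Surjective q := hq
    have hkq : FlatDimLE R n (ModuleCat.of R ↥(LinearMap.ker q)) := hkq₀
    classical
    let sec : C → B := Function.surjInv hg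
    have hgsec : ∀ c, g (sec c) = c := fun c => Function.surjInv_eq hg c
    let hmap : (C →₀ R) →ₗ[R] B := Finsupp.linearCombination R sec
    let tot : (C →₀ R) →ₗ[R] C := Finsupp.linearCombination R _root_.id
    have hkey : ∀ v, g (hmap v) = tot v := by
      intro v
      show g (Finsupp.linearCombination R sec v) = Finsupp.linearCombination R _root_.id v
      rw [Finsupp.apply_linearCombination, show (⇑g ∘ sec) = _root_.id from funext hgsec]
    have htotsurj : Function.Surjective tot := fun c =>
      ⟨Finsupp.single c 1, by
        show Finsupp.linearCombination R _root_.id (Finsupp.single c 1) = c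
        rw [Finsupp.linearCombination_single, one_smul]; rfl⟩
    have hktot : Module.Flat R ↥(LinearMap.ker tot) :=
      flat_of_flat_flat (A := ↥(LinearMap.ker tot)) (LinearMap.ker tot).subtype tot (Submodule.injective_subtype _) htotsurj
        (LinearMap.exact_subtype_ker_map tot)
    exact fd_horseshoe n g hg q hqsurj tot htotsurj hmap hkey (fun g' hg' hk => ih g' hg' hk) hkq

end FDMachinery
section MainLemma

open LinearMap

variable {R : Type u} [CommRing R] [IsLocalRing R]

/-- Osofsky's key induction: for a "linked pair" `a, b`, the module `R/(a)` does not have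
flat dimension `≤ n`, for any `n`. -/
theorem main_not_fd (n : ℕ) : ∀ (a b : R), a * b = 0 → a ≠ 0 → b ≠ 0 →
    (∀ r : R, r * a = 0 ↔ r ∈ Ideal.span {b}) → (∀ r : R, r * b = 0 ↔ r ∈ Ideal.span {a}) →
    ¬ FlatDimLE R n (ModuleCat.of R (R ⧸ (Ideal.span {a} : Ideal R))) := by
  induction n with
  | zero =>
    intro a b hab ha hb hA hB hFD
    have hflat : Module.Flat R (R ⧸ (Ideal.span {a} : Ideal R)) := hFD
    have hfg : (Ideal.span {a} : Ideal R).FG := ⟨{a}, by simp⟩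
    have hfp : Module.FinitePresentation R (R ⧸ (Ideal.span {a} : Ideal R)) := by
      refine Module.finitePresentation_of_surjective (Ideal.span {a} : Ideal R).mkQ
        (Submodule.mkQ_surjective _) ?_
      rw [Submodule.ker_mkQ]
      exact hfg
    have hfree : Module.Free R (R ⧸ (Ideal.span {a} : Ideal R)) :=
      Module.free_of_flat_of_isLocalRing
    have hone : (1 : R) ∉ (Ideal.span {a} : Ideal R) := by
      intro h1
      obtain ⟨c, hc⟩ := Ideal.mem_span_singleton'.mp h1
      apply hb
      calc b = 1 * b := (one_mul b).symm
        _ = c * a * b := by rw [hc]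
        _ = c * (a * b) := by rw [mul_assoc]
        _ = 0 := by rw [hab, mul_zero]
    have hnt : Nontrivial (R ⧸ (Ideal.span {a} : Ideal R)) := by
      refine ⟨⟨Submodule.Quotient.mk 1, 0, ?_⟩⟩
      rw [ne_eq, Submodule.Quotient.mk_eq_zero]
      exact hone
    let bas := Module.Free.chooseBasis R (R ⧸ (Ideal.span {a} : Ideal R))
    have hne : Nonempty (Module.Free.ChooseBasisIndex R (R ⧸ (Ideal.span {a} : Ideal R))) :=
      bas.index_nonempty
    obtain ⟨i⟩ := hne
    have hsmul : ∀ z : R ⧸ (Ideal.span {a} : Ideal R), a • z = 0 := by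
      intro z
      obtain ⟨r, rfl⟩ := Submodule.Quotient.mk_surjective _ z
      rw [← Submodule.Quotient.mk_smul, Submodule.Quotient.mk_eq_zero]
      exact Ideal.mem_span_singleton'.mpr ⟨r, (mul_comm r a).trans rfl⟩
    have h1 : a • bas i = 0 := hsmul _
    have h2 : a = 0 := by
      have h3 := congrArg (fun z => bas.repr z i) h1
      simpa [Module.Basis.repr_self] using h3
    exact ha h2
  | succ n ih =>
    intro a b hab ha hb hA hB hFD
    obtain ⟨F, f₀, hsurj, hF, hker⟩ := hFD
    let f : ↑F →ₗ[R] (R ⧸ (Ideal.span {a} : Ideal R)) := f₀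
    have hfsurj : Function.Surjective f := hsurj
    have hkf : FlatDimLE R n (ModuleCat.of R ↥(LinearMap.ker f)) := hker
    let mk : R →ₗ[R] (R ⧸ (Ideal.span {a} : Ideal R)) := (Ideal.span {a} : Ideal R).mkQ
    let ψ : (R × ↑F) →ₗ[R] (R ⧸ (Ideal.span {a} : Ideal R)) :=
      mk.comp (LinearMap.fst R R ↑F) - f.comp (LinearMap.snd R R ↑F)
    have hψ_apply : ∀ (r : R) (v : ↑F), ψ (r, v) = mk r - f v := fun r v => rfl
    -- first projection from the pullback
    let π₁ : ↥(LinearMap.ker ψ) →ₗ[R] R := (LinearMap.fst R R ↑F).comp (LinearMap.ker ψ).subtype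
    have hπ₁surj : Function.Surjective π₁ := by
      intro r
      obtain ⟨v, hv⟩ := hfsurj (mk r)
      have hmem : (r, v) ∈ LinearMap.ker ψ := by
        rw [LinearMap.mem_ker, hψ_apply, hv, sub_self]
      exact ⟨⟨(r, v), hmem⟩, rfl⟩
    have hmk1 : ∀ x : ↥(LinearMap.ker π₁), f (x.1.1 : R × ↑F).2 = 0 := by
      rintro ⟨⟨⟨r, v⟩, hrv⟩, hx⟩
      have hr0 : r = 0 := LinearMap.mem_ker.mp hx
      have h0 : mk r - f v = 0 := hrv
      rw [hr0, map_zero, zero_sub, neg_eq_zero] at h0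
      exact h0
    have hmk2 : ∀ w : ↥(LinearMap.ker f), (((0 : R), (w.1 : ↑F)) : R × ↑F) ∈ LinearMap.ker ψ := by
      rintro ⟨w, hw⟩
      rw [LinearMap.mem_ker, hψ_apply, LinearMap.mem_ker.mp hw, map_zero, sub_self]
    let e₁ : ↥(LinearMap.ker π₁) ≃ₗ[R] ↥(LinearMap.ker f) :=
      { toFun := fun x => ⟨(x.1.1 : R × ↑F).2, hmk1 x⟩
        map_add' := fun x y => Subtype.ext rfl
        map_smul' := fun c x => Subtype.ext rfl
        invFun := fun w => ⟨⟨(0, w.1), hmk2 w⟩, rfl⟩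
        left_inv := by
          rintro ⟨⟨⟨r, v⟩, hrv⟩, hx⟩
          have hr0 : r = 0 := LinearMap.mem_ker.mp hx
          exact Subtype.ext (Subtype.ext (Prod.ext hr0.symm rfl))
        right_inv := fun w => Subtype.ext rfl }
    have hP : FlatDimLE R n (ModuleCat.of R ↥(LinearMap.ker ψ)) :=
      fd_of_fd_ker n π₁ hπ₁surj (fd_congr e₁.symm n hkf)
    -- second projection
    let π₂ : ↥(LinearMap.ker ψ) →ₗ[R] ↑F := (LinearMap.snd R R ↑F).comp (LinearMap.ker ψ).subtype
    have hπ₂surj : Function.Surjective π₂ := by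
      intro v
      obtain ⟨r, hr⟩ := Submodule.mkQ_surjective (Ideal.span {a} : Ideal R) (f v)
      have hmem : (r, v) ∈ LinearMap.ker ψ := by
        rw [LinearMap.mem_ker, hψ_apply, show mk r = f v from hr, sub_self]
      exact ⟨⟨(r, v), hmem⟩, rfl⟩
    haveI : Module.Flat R ↑F := hF
    have hkπ₂ : FlatDimLE R n (ModuleCat.of R ↥(LinearMap.ker π₂)) :=
      fd_ker_of_fd n π₂ hπ₂surj hP
    -- identify ker π₂ with the ideal (a)
    have hm1 : ∀ x : ↥(LinearMap.ker π₂), (x.1.1 : R × ↑F).1 ∈ (Ideal.span {a} : Ideal R) := by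
      rintro ⟨⟨⟨r, v⟩, hrv⟩, hx⟩
      have hv0 : v = 0 := LinearMap.mem_ker.mp hx
      have h0 : mk r - f v = 0 := hrv
      rw [hv0, map_zero, sub_zero] at h0
      exact (Submodule.Quotient.mk_eq_zero _).mp h0
    have hm2 : ∀ s : ↥(Ideal.span {a} : Ideal R),
        (((s.1 : R), (0 : ↑F)) : R × ↑F) ∈ LinearMap.ker ψ := by
      rintro ⟨s, hs⟩
      rw [LinearMap.mem_ker, hψ_apply, map_zero, sub_zero]
      exact (Submodule.Quotient.mk_eq_zero _).mpr hs
    let e₂ : ↥(LinearMap.ker π₂) ≃ₗ[R] ↥(Ideal.span {a} : Ideal R) :=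
      { toFun := fun x => ⟨(x.1.1 : R × ↑F).1, hm1 x⟩
        map_add' := fun x y => Subtype.ext rfl
        map_smul' := fun c x => Subtype.ext rfl
        invFun := fun s => ⟨⟨(s.1, 0), hm2 s⟩, rfl⟩
        left_inv := by
          rintro ⟨⟨⟨r, v⟩, hrv⟩, hx⟩
          have hv0 : v = 0 := LinearMap.mem_ker.mp hx
          exact Subtype.ext (Subtype.ext (Prod.ext rfl hv0.symm))
        right_inv := fun s => Subtype.ext rfl }
    have hspan : FlatDimLE R n (ModuleCat.of R ↥(Ideal.span {a} : Ideal R)) :=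
      fd_congr e₂ n hkπ₂
    -- (a) ≅ R / (b)
    let μ : R →ₗ[R] ↥(Ideal.span {a} : Ideal R) :=
      LinearMap.codRestrict (Ideal.span {a} : Ideal R) (LinearMap.toSpanSingleton R R a)
        (fun r => Submodule.smul_mem _ r (Submodule.mem_span_singleton_self a))
    have hμsurj : Function.Surjective μ := by
      rintro ⟨s, hs⟩
      obtain ⟨c, hc⟩ := Ideal.mem_span_singleton'.mp hs
      refine ⟨c, Subtype.ext ?_⟩
      show c • a = s
      rw [smul_eq_mul, hc]
    have hμker : LinearMap.ker μ = (Ideal.span {b} : Ideal R) := by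
      ext r
      rw [LinearMap.mem_ker]
      constructor
      · intro h0
        have : r • a = 0 := congrArg Subtype.val h0
        rw [smul_eq_mul] at this
        exact (hA r).mp this
      · intro hr
        refine Subtype.ext ?_
        show r • a = 0
        rw [smul_eq_mul]
        exact (hA r).mpr hr
    have e₃ : (R ⧸ (Ideal.span {b} : Ideal R)) ≃ₗ[R] ↥(Ideal.span {a} : Ideal R) :=
      hμker ▸ LinearMap.quotKerEquivOfSurjective μ hμsurj
    have hfinal : FlatDimLE R n (ModuleCat.of R (R ⧸ (Ideal.span {b} : Ideal R))) :=
      fd_congr e₃.symm n hspan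
    exact ih b a (by rw [mul_comm]; exact hab) hb ha hB hA hfinal

end MainLemma
/-- Osofsky's Lemma 2: if `(0 : x)` is principal for some nonzero `x ∈ m`,
then `R` has infinite weak global dimension. -/
theorem stmt_2 (R : Type u) [CommRing R] [IsLocalRing R] (hch : IsChainedRing R)
    (hzd : HasZeroDivisors R)
    (hZ : ∀ x : R, x ∈ IsLocalRing.maximalIdeal R ↔ ∃ y : R, y ≠ 0 ∧ x * y = 0)
    (x : R) (hx0 : x ≠ 0) (hxm : x ∈ IsLocalRing.maximalIdeal R)
    (hprin : ∃ y : R, ∀ r : R, r * x = 0 ↔ ∃ s : R, r = y * s) :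
    HasInfiniteWeakGlobalDimension R := by
  obtain ⟨y, hy⟩ := hprin
  have hyx : y * x = 0 := (hy y).mpr ⟨1, (mul_one y).symm⟩
  have hxy : x * y = 0 := by rw [mul_comm]; exact hyx
  have hy0 : y ≠ 0 := by
    obtain ⟨z, hz0, hzx⟩ := (hZ x).mp hxm
    obtain ⟨s, hs⟩ := (hy z).mp (by rw [mul_comm]; exact hzx)
    intro h0
    apply hz0
    rw [hs, h0, zero_mul]
  have hA : ∀ r : R, r * x = 0 ↔ r ∈ Ideal.span {y} := by
    intro r
    rw [Ideal.mem_span_singleton']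
    constructor
    · intro h0
      obtain ⟨s, hs⟩ := (hy r).mp h0
      exact ⟨s, by rw [mul_comm]; exact hs.symm⟩
    · rintro ⟨c, hc⟩
      exact (hy r).mpr ⟨c, by rw [mul_comm]; exact hc.symm⟩
  have hB : ∀ r : R, r * y = 0 ↔ r ∈ Ideal.span {x} := by
    intro r
    constructor
    · intro hry
      rcases hch (Ideal.span {r}) (Ideal.span {x}) with hle | hle
      · exact hle (Ideal.subset_span (Set.mem_singleton r))
      · obtain ⟨t, ht⟩ := Ideal.mem_span_singleton'.mp
          (hle (Ideal.subset_span (Set.mem_singleton x)))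
        by_cases hu : IsUnit t
        · obtain ⟨u, rfl⟩ := hu
          refine Ideal.mem_span_singleton'.mpr ⟨(↑u⁻¹ : R), ?_⟩
          rw [← ht, ← mul_assoc]
          simp
        · rcases hch (Ideal.span {y}) (Ideal.span {t}) with hle2 | hle2
          · -- y = c * t
            obtain ⟨c, hc⟩ := Ideal.mem_span_singleton'.mp
              (hle2 (Ideal.subset_span (Set.mem_singleton y)))
            have hcx : c * x = 0 := by
              calc c * x = c * (t * r) := by rw [ht]
                _ = (c * t) * r := by rw [mul_assoc]
                _ = y * r := by rw [hc]
                _ = r * y := mul_comm y r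
                _ = 0 := hry
            obtain ⟨d, hd⟩ := Ideal.mem_span_singleton'.mp ((hA c).mp hcx)
            have hy1 : y * (1 - d * t) = 0 := by
              have : y * (d * t) = y := by
                calc y * (d * t) = (d * y) * t := by ring
                  _ = c * t := by rw [hd]
                  _ = y := hc
              rw [mul_sub, mul_one, this, sub_self]
            have hdt : IsUnit (1 - d * t) := by
              apply IsLocalRing.isUnit_one_sub_self_of_mem_nonunits
              intro hcon
              exact hu (isUnit_of_mul_isUnit_right hcon)
            obtain ⟨w, hw⟩ := hdt
            have hyy : y = 0 := by
              have h2 : y * ((1 - d * t) * ↑w⁻¹) = 0 := by rw [← mul_assoc, hy1, zero_mul]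
              rwa [← hw, Units.mul_inv, mul_one] at h2
            exact absurd hyy hy0
          · -- t = c * y
            obtain ⟨c, hc⟩ := Ideal.mem_span_singleton'.mp
              (hle2 (Ideal.subset_span (Set.mem_singleton t)))
            exact absurd (by
              calc x = t * r := ht.symm
                _ = (c * y) * r := by rw [hc]
                _ = c * (r * y) := by ring
                _ = 0 := by rw [hry, mul_zero]) hx0
    · intro hr
      obtain ⟨c, hc⟩ := Ideal.mem_span_singleton'.mp hr
      calc r * y = (c * x) * y := by rw [hc]
        _ = c * (x * y) := by rw [mul_assoc]
        _ = 0 := by rw [hxy, mul_zero]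
  intro n
  exact ⟨ModuleCat.of R (R ⧸ (Ideal.span {x} : Ideal R)),
    main_not_fd n x y hxy hx0 hy0 hA hB⟩
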